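/- Two linear Z_4-codes C, C' of length n are equivalent (i.e., C = τ_{j_1}⋯τ_{j_ℓ}σ(C') for some permutation σ of coordinates and sign changes τ_j negating the j-th coordinate) if and only if the associated digraphs Γ(C) and Γ(C') are isomorphic, where Γ(C) has vertex set (C∖{0}) ∪ ({1,…,n}×(Z_4∖{0})), arcs (c,(j,c_j)) for each nonzero codeword c and each coordinate j with c_j ≠ 0, together with arcs ((j,x),(j,2)) and ((j,2),(j,x)) for each coordinate j and each x ∈ {1,3}. -/

import Mathlib

/-- Vertex set of the digraph `Γ(C)` attached to a `ℤ₄`-code `C` of length `n`: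
the nonzero codewords together with the pairs `(j, x)` with `x ∈ ℤ₄ \ {0}`. -/
def Z4Vert (n : ℕ) (C : Set (Fin n → ZMod 4)) :=
  {c : Fin n → ZMod 4 // c ∈ C ∧ c ≠ 0} ⊕ (Fin n × {x : ZMod 4 // x ≠ 0})

/-- Arc relation of the digraph `Γ(C)`: arcs `(c, (j, c_j))` for every nonzero
codeword `c` and coordinate `j` with `c_j ≠ 0`, together with arcs
`((j, x), (j, 2))` and `((j, 2), (j, x))` for every `j` and `x ∈ {1, 3}`. -/
def Z4Arc (n : ℕ) (C : Set (Fin n → ZMod 4)) : Z4Vert n C → Z4Vert n C → Prop :=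
  fun u v =>
    match u, v with
    | Sum.inl c, Sum.inr (j, x) => x.1 = c.1 j
    | Sum.inr (j, x), Sum.inr (j', y) =>
        j = j' ∧ ((x.1 = 2 ∧ (y.1 = 1 ∨ y.1 = 3)) ∨ ((x.1 = 1 ∨ x.1 = 3) ∧ y.1 = 2))
    | _, _ => False

/-- Two linear `ℤ₄`-codes are equivalent: one is obtained from the other by a
permutation of the coordinates together with negations of some coordinates. -/
def Z4CodeEquiv (n : ℕ) (C C' : Submodule (ZMod 4) (Fin n → ZMod 4)) : Prop :=
  ∃ σ : Equiv.Perm (Fin n), ∃ ε : Fin n → ZMod 4, (∀ j, ε j = 1 ∨ ε j = -1) ∧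
    (C : Set (Fin n → ZMod 4)) =
      (fun x : Fin n → ZMod 4 => fun j => ε j * x (σ j)) '' (C' : Set (Fin n → ZMod 4))

attribute [reducible] Z4Vert

def Z4P (x y : ZMod 4) : Prop := (x = 2 ∧ (y = 1 ∨ y = 3)) ∨ ((x = 1 ∨ x = 3) ∧ y = 2)
instance : ∀ x y, Decidable (Z4P x y) := fun x y => by unfold Z4P; infer_instance

lemma arc_inr_iff {n S j j' x y} : Z4Arc n S (Sum.inr (j,x)) (Sum.inr (j',y)) ↔ j = j' ∧ Z4P x.1 y.1 := Iff.rfl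
lemma arc_inl_inr_iff {n S c j x} : Z4Arc n S (Sum.inl c) (Sum.inr (j,x)) ↔ x.1 = c.1 j := Iff.rfl
lemma arc_inl_inl {n S c c'} : ¬ Z4Arc n S (Sum.inl c) (Sum.inl c') := fun h => h
lemma arc_inr_inl {n S w c'} : ¬ Z4Arc n S (Sum.inr w) (Sum.inl c') := fun h => h

lemma z4_ne0 : ∀ x : ZMod 4, x ≠ 0 → x = 1 ∨ x = 2 ∨ x = 3 := by decide
lemma z4_sq : ∀ a y : ZMod 4, (a = 1 ∨ a = 3) → a * (a * y) = y := by decide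
lemma z4_unit_ne : ∀ a y : ZMod 4, (a = 1 ∨ a = 3) → y ≠ 0 → a * y ≠ 0 := by decide
lemma z4_P_mul : ∀ a x y : ZMod 4, (a = 1 ∨ a = -1) → (Z4P x y ↔ Z4P (a*x) (a*y)) := by decide
lemma z4_key1 : ∀ a b c : ZMod 4, Z4P a b → Z4P b c → b = 2 ∨ (a = 2 ∧ c = 2) := by decide
lemma z4_P2 : ∀ a : ZMod 4, Z4P a 2 → a = 1 ∨ a = 3 := by decide

lemma z4_neg1 : (-1 : ZMod 4) = 3 := by decide

lemma fwd (n : ℕ) (C C' : Submodule (ZMod 4) (Fin n → ZMod 4))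
    (h : ∃ σ : Equiv.Perm (Fin n), ∃ ε : Fin n → ZMod 4, (∀ j, ε j = 1 ∨ ε j = -1) ∧
    (C : Set (Fin n → ZMod 4)) =
      (fun x : Fin n → ZMod 4 => fun j => ε j * x (σ j)) '' (C' : Set (Fin n → ZMod 4))) :
    ∃ e : Z4Vert n (C : Set (Fin n → ZMod 4)) ≃ Z4Vert n (C' : Set (Fin n → ZMod 4)),
        ∀ u v, Z4Arc n (C : Set (Fin n → ZMod 4)) u v ↔
          Z4Arc n (C' : Set (Fin n → ZMod 4)) (e u) (e v) := by
  obtain ⟨σ, ε, hε, hS⟩ := h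
  have hε3 : ∀ j, ε j = 1 ∨ ε j = 3 := fun j => by rw [← z4_neg1]; exact hε j
  set F : (Fin n → ZMod 4) → (Fin n → ZMod 4) := fun x j => ε j * x (σ j) with hF
  set G : (Fin n → ZMod 4) → (Fin n → ZMod 4) :=
    fun c j' => ε (σ.symm j') * c (σ.symm j') with hG
  have hFG : ∀ c, F (G c) = c := by
    intro c; funext j
    simp only [hF, hG, Equiv.symm_apply_apply]
    exact z4_sq _ _ (hε3 j)
  have hGF : ∀ x, G (F x) = x := by
    intro x; funext j'
    simp only [hF, hG, Equiv.apply_symm_apply]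
    exact z4_sq _ _ (hε3 _)
  have hF0 : F 0 = 0 := by funext j; simp [hF]
  have hG0 : G 0 = 0 := by funext j; simp [hG]
  have hmem : ∀ c, c ∈ (C : Set (Fin n → ZMod 4)) ↔ G c ∈ (C' : Set (Fin n → ZMod 4)) := by
    intro c
    constructor
    · intro hc; rw [hS] at hc; obtain ⟨x, hx, rfl⟩ := hc
      rw [hGF]; exact hx
    · intro hc; rw [hS]; exact ⟨G c, hc, hFG c⟩
  have hne : ∀ c : Fin n → ZMod 4, c ≠ 0 → G c ≠ 0 := by
    intro c hc h0
    exact hc (by rw [← hFG c, h0, hF0])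
  have hne' : ∀ c : Fin n → ZMod 4, G c ≠ 0 → c ≠ 0 := by
    intro c hc h0; apply hc; rw [h0]; funext j; simp [hG]
  have hεne : ∀ j (x : ZMod 4), x ≠ 0 → ε j * x ≠ 0 := fun j x hx => z4_unit_ne _ _ (hε3 j) hx
  refine ⟨⟨Sum.elim (fun c => Sum.inl ⟨G c.1, (hmem _).mp c.2.1, hne _ c.2.2⟩)
      (fun w => Sum.inr (σ w.1, ⟨ε w.1 * w.2.1, hεne _ _ w.2.2⟩)),
    Sum.elim (fun c => Sum.inl ⟨F c.1, (hmem _).mpr (by rw [hGF]; exact c.2.1), by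
        intro h0; exact c.2.2 (by rw [← hGF c.1, h0, hG0])⟩)
      (fun w => Sum.inr (σ.symm w.1, ⟨ε (σ.symm w.1) * w.2.1, hεne _ _ w.2.2⟩)),
    ?_, ?_⟩, ?_⟩
  · rintro (c | ⟨j, x⟩)
    · simp only [Sum.elim_inl]
      congr 1; exact Subtype.ext (hFG c.1)
    · simp only [Sum.elim_inr]
      congr 1
      refine Prod.ext (by simp) (Subtype.ext ?_)
      simp only [Equiv.symm_apply_apply]
      exact z4_sq _ _ (hε3 j)
  · rintro (c | ⟨j, x⟩)
    · simp only [Sum.elim_inl]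
      congr 1; exact Subtype.ext (hGF c.1)
    · simp only [Sum.elim_inr]
      congr 1
      refine Prod.ext (by simp) (Subtype.ext ?_)
      simp only [Equiv.apply_symm_apply]
      exact z4_sq _ _ (hε3 _)
  · rintro (c | ⟨j, x⟩) (c' | ⟨j', y⟩)
    · exact ⟨fun h => h.elim, fun h => h.elim⟩
    · simp only [Equiv.coe_fn_mk, Sum.elim_inl, Sum.elim_inr]
      rw [arc_inl_inr_iff, arc_inl_inr_iff]
      show y.1 = c.1 j' ↔ ε j' * y.1 = G c.1 (σ j')
      have : G c.1 (σ j') = ε j' * c.1 j' := by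
        simp only [hG, Equiv.symm_apply_apply]
      rw [this]
      constructor
      · intro h; rw [h]
      · intro h
        have := congrArg (fun t => ε j' * t) h
        simpa [z4_sq _ _ (hε3 j')] using this
    · exact ⟨fun h => h.elim, fun h => h.elim⟩
    · simp only [Equiv.coe_fn_mk, Sum.elim_inr]
      rw [arc_inr_iff, arc_inr_iff]
      show (j = j' ∧ Z4P x.1 y.1) ↔ (σ j = σ j' ∧ Z4P (ε j * x.1) (ε j' * y.1))
      constructor
      · rintro ⟨rfl, hP⟩
        exact ⟨rfl, (z4_P_mul _ _ _ (hε j)).mp hP⟩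
      · rintro ⟨hj, hP⟩
        have hj' : j = j' := σ.injective hj
        subst hj'
        exact ⟨rfl, (z4_P_mul _ _ _ (hε j)).mpr hP⟩

lemma z4_mul2 : ∀ a : ZMod 4, (a = 1 ∨ a = 3) → a * 2 = 2 := by decide
lemma z4_mul3 : ∀ a b : ZMod 4, (a = 1 ∨ a = 3) → (b = 1 ∨ b = 3) → a ≠ b → b = a * 3 := by decide

lemma pair_ext {n : ℕ} {a b : Fin n × {x : ZMod 4 // x ≠ 0}}
    (h1 : a.1 = b.1) (h2 : a.2.1 = b.2.1) : a = b := by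
  obtain ⟨a1, a2⟩ := a; obtain ⟨b1, b2⟩ := b
  cases Subtype.ext h2
  cases h1
  rfl

/-- Arcs always point to `inr` vertices. -/
lemma arc_target {n : ℕ} {S : Set (Fin n → ZMod 4)} {u v : Z4Vert n S}
    (h : Z4Arc n S u v) : ∃ w, v = Sum.inr w := by
  rcases v with c | w
  · rcases u with c' | w' <;> exact h.elim
  · exact ⟨w, rfl⟩

/-- Every `inr` vertex is the target of some arc. -/
lemma arc_into {n : ℕ} (S : Set (Fin n → ZMod 4)) (j : Fin n) (x : {x : ZMod 4 // x ≠ 0}) :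
    ∃ u, Z4Arc n S u (Sum.inr (j, x)) := by
  rcases z4_ne0 x.1 x.2 with h1 | h2 | h3
  · exact ⟨Sum.inr (j, ⟨2, by decide⟩), rfl, Or.inl ⟨rfl, Or.inl h1⟩⟩
  · exact ⟨Sum.inr (j, ⟨1, by decide⟩), rfl, Or.inr ⟨Or.inl rfl, h2⟩⟩
  · exact ⟨Sum.inr (j, ⟨2, by decide⟩), rfl, Or.inl ⟨rfl, Or.inr h3⟩⟩

lemma bwd (n : ℕ) (C C' : Submodule (ZMod 4) (Fin n → ZMod 4))
    (h : ∃ e : Z4Vert n (C : Set (Fin n → ZMod 4)) ≃ Z4Vert n (C' : Set (Fin n → ZMod 4)),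
        ∀ u v, Z4Arc n (C : Set (Fin n → ZMod 4)) u v ↔
          Z4Arc n (C' : Set (Fin n → ZMod 4)) (e u) (e v)) :
    ∃ σ : Equiv.Perm (Fin n), ∃ ε : Fin n → ZMod 4, (∀ j, ε j = 1 ∨ ε j = -1) ∧
    (C : Set (Fin n → ZMod 4)) =
      (fun x : Fin n → ZMod 4 => fun j => ε j * x (σ j)) '' (C' : Set (Fin n → ZMod 4)) := by
  obtain ⟨e, he⟩ := h
  have he' : ∀ u v, Z4Arc n (C' : Set (Fin n → ZMod 4)) u v ↔
      Z4Arc n (C : Set (Fin n → ZMod 4)) (e.symm u) (e.symm v) := by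
    intro u v
    have := he (e.symm u) (e.symm v)
    simpa using this.symm
  -- e maps inr vertices to inr vertices
  have hp0 : ∀ w, ∃ w', e (Sum.inr w) = Sum.inr w' := by
    rintro ⟨j, x⟩
    obtain ⟨u, hu⟩ := arc_into (C : Set (Fin n → ZMod 4)) j x
    exact arc_target ((he _ _).mp hu)
  have hq0 : ∀ w, ∃ w', e.symm (Sum.inr w) = Sum.inr w' := by
    rintro ⟨j, x⟩
    obtain ⟨u, hu⟩ := arc_into (C' : Set (Fin n → ZMod 4)) j x
    exact arc_target ((he' _ _).mp hu)
  choose p hp using hp0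
  choose q hq using hq0
  have hqp : ∀ w, q (p w) = w := by
    intro w
    have : Sum.inr (q (p w)) = (Sum.inr w : Z4Vert n (C : Set (Fin n → ZMod 4))) := by
      rw [← hq, ← hp, Equiv.symm_apply_apply]
    exact Sum.inr_injective this
  have hpinj : Function.Injective p := Function.LeftInverse.injective hqp
  -- e maps inl vertices to inl vertices
  have hr0 : ∀ c, ∃ c', e (Sum.inl c) = Sum.inl c' := by
    intro c
    rcases hc : e (Sum.inl c) with c' | w
    · exact ⟨c', rfl⟩
    · exfalso
      have h1 : e.symm (Sum.inr w) = Sum.inl c := by rw [← hc, Equiv.symm_apply_apply]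
      rw [hq] at h1
      exact absurd h1 (by simp)
  choose r hr using hr0
  -- arc transfer on inr vertices
  have harc : ∀ w w', (Z4Arc n (C : Set (Fin n → ZMod 4)) (Sum.inr w) (Sum.inr w') ↔
      Z4Arc n (C' : Set (Fin n → ZMod 4)) (Sum.inr (p w)) (Sum.inr (p w'))) := by
    intro w w'
    rw [← hp, ← hp]; exact he _ _
  -- special vertices
  let v1 : Fin n → Fin n × {x : ZMod 4 // x ≠ 0} := fun j => (j, ⟨1, by decide⟩)
  let v2 : Fin n → Fin n × {x : ZMod 4 // x ≠ 0} := fun j => (j, ⟨2, by decide⟩)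
  let v3 : Fin n → Fin n × {x : ZMod 4 // x ≠ 0} := fun j => (j, ⟨3, by decide⟩)
  set J : Fin n → Fin n := fun j => (p (v2 j)).1 with hJ
  set δ : Fin n → ZMod 4 := fun j => (p (v1 j)).2.1 with hδ
  have hP : ∀ w w', Z4Arc n (C : Set (Fin n → ZMod 4)) (Sum.inr w) (Sum.inr w') →
      (p w).1 = (p w').1 ∧ Z4P (p w).2.1 (p w').2.1 := by
    intro w w' hw
    have := (harc _ _).mp hw
    rw [show (p w) = ((p w).1, (p w).2) from rfl,
        show (p w') = ((p w').1, (p w').2) from rfl, arc_inr_iff] at this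
    exact this
  -- arcs among special vertices, transferred
  have a12 := fun j => hP (v1 j) (v2 j) ⟨rfl, Or.inr ⟨Or.inl rfl, rfl⟩⟩
  have a21 := fun j => hP (v2 j) (v1 j) ⟨rfl, Or.inl ⟨rfl, Or.inl rfl⟩⟩
  have a23 := fun j => hP (v2 j) (v3 j) ⟨rfl, Or.inl ⟨rfl, Or.inr rfl⟩⟩
  have a32 := fun j => hP (v3 j) (v2 j) ⟨rfl, Or.inr ⟨Or.inr rfl, rfl⟩⟩
  have h13 : ∀ j, p (v1 j) ≠ p (v3 j) := by
    intro j hne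
    have h' : (1 : ZMod 4) = 3 := congrArg (fun t => t.2.1) (hpinj hne)
    exact absurd h' (by decide)
  -- the middle vertex goes to the middle vertex
  have h2 : ∀ j, (p (v2 j)).2.1 = 2 := by
    intro j
    rcases z4_key1 _ _ _ (a12 j).2 (a23 j).2 with h | ⟨h1, h3⟩
    · exact h
    · exact absurd (pair_ext ((a12 j).1.trans (a23 j).1) (h1.trans h3.symm)) (h13 j)
  have hδ13 : ∀ j, δ j = 1 ∨ δ j = 3 := by
    intro j
    apply z4_P2
    rw [← h2 j]
    exact (a12 j).2
  have h3val : ∀ j, (p (v3 j)).2.1 = δ j * 3 := by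
    intro j
    have h3' : (p (v3 j)).2.1 = 1 ∨ (p (v3 j)).2.1 = 3 := by
      apply z4_P2
      rw [← h2 j]
      exact (a32 j).2
    refine z4_mul3 _ _ (hδ13 j) h3' ?_
    intro hne
    exact absurd (pair_ext ((a12 j).1.trans (a23 j).1) hne) (h13 j)
  -- full description of p
  have hpall : ∀ j (x : {x : ZMod 4 // x ≠ 0}),
      p (j, x) = (J j, ⟨δ j * x.1, z4_unit_ne _ _ (hδ13 j) x.2⟩) := by
    rintro j ⟨xv, hxv⟩
    rcases z4_ne0 xv hxv with h | h | h <;> subst h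
    · refine pair_ext ?_ ?_
      · exact (a12 j).1
      · show (p (v1 j)).2.1 = δ j * 1
        rw [mul_one]
    · refine pair_ext rfl ?_
      show (p (v2 j)).2.1 = δ j * 2
      rw [h2 j]
      exact (z4_mul2 _ (hδ13 j)).symm
    · refine pair_ext ?_ ?_
      · exact (a23 j).1.symm
      · show (p (v3 j)).2.1 = δ j * 3
        exact h3val j
  -- J is a bijection
  have hJinj : Function.Injective J := by
    intro j j' hjj
    have : p (v2 j) = p (v2 j') := pair_ext hjj (by rw [h2 j, h2 j'])
    exact congrArg Prod.fst (hpinj this)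
  let σ : Equiv.Perm (Fin n) := Equiv.ofBijective J (Finite.injective_iff_bijective.mp hJinj)
  -- codeword coordinates
  have hδsq : ∀ j (y : ZMod 4), δ j * (δ j * y) = y := fun j y => z4_sq _ _ (hδ13 j)
  have hcw : ∀ (c : {c : Fin n → ZMod 4 // c ∈ (C : Set (Fin n → ZMod 4)) ∧ c ≠ 0}) (j : Fin n),
      (r c).1 (J j) = δ j * c.1 j := by
    intro c j
    by_cases hcj : c.1 j = 0
    · rw [hcj, mul_zero]
      by_contra hy
      have hyne : (r c).1 (J j) ≠ 0 := hy
      have hδy : δ j * (r c).1 (J j) ≠ 0 := z4_unit_ne _ _ (hδ13 j) hyne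
      have harc' : Z4Arc n (C' : Set (Fin n → ZMod 4)) (Sum.inl (r c))
          (Sum.inr (J j, ⟨(r c).1 (J j), hyne⟩)) := rfl
      have hpy : p (j, ⟨δ j * (r c).1 (J j), hδy⟩) = (J j, ⟨(r c).1 (J j), hyne⟩) := by
        rw [hpall]
        exact pair_ext rfl (hδsq j _)
      have harc2 : Z4Arc n (C : Set (Fin n → ZMod 4)) (Sum.inl c)
          (Sum.inr (j, ⟨δ j * (r c).1 (J j), hδy⟩)) := by
        rw [he _ _, hr, hp, hpy]
        exact harc'
      have : δ j * (r c).1 (J j) = c.1 j := harc2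
      rw [hcj] at this
      exact hδy this
    · have harc1 : Z4Arc n (C : Set (Fin n → ZMod 4)) (Sum.inl c)
          (Sum.inr (j, ⟨c.1 j, hcj⟩)) := rfl
      have := (he _ _).mp harc1
      rw [hr, hp, hpall] at this
      exact this.symm
  refine ⟨σ, δ, fun j => by rw [z4_neg1]; exact hδ13 j, ?_⟩
  apply Set.Subset.antisymm
  · intro c hc
    by_cases h0 : c = 0
    · subst h0
      exact ⟨0, C'.zero_mem, by funext j; simp⟩
    · refine ⟨(r ⟨c, hc, h0⟩).1, (r ⟨c, hc, h0⟩).2.1, ?_⟩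
      funext j
      show δ j * (r ⟨c, hc, h0⟩).1 (σ j) = c j
      have hσ : σ j = J j := rfl
      rw [hσ, hcw ⟨c, hc, h0⟩ j, hδsq]
  · rintro _ ⟨x, hx, rfl⟩
    by_cases h0 : x = 0
    · subst h0
      show (fun j => δ j * (0 : Fin n → ZMod 4) (σ j)) ∈ (C : Set (Fin n → ZMod 4))
      have : (fun j => δ j * (0 : Fin n → ZMod 4) (σ j)) = (0 : Fin n → ZMod 4) := by
        funext j; simp
      rw [this]
      exact C.zero_mem
    · obtain ⟨c, hc⟩ : ∃ c, e.symm (Sum.inl ⟨x, hx, h0⟩) = Sum.inl c := by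
        rcases hc : e.symm (Sum.inl ⟨x, hx, h0⟩) with c | w
        · exact ⟨c, rfl⟩
        · exfalso
          have h1 := hp w
          rw [← hc, Equiv.apply_symm_apply] at h1
          exact absurd h1 (by simp)
      have hrc : r c = ⟨x, hx, h0⟩ := by
        have h1 : e (Sum.inl c) = Sum.inl (⟨x, hx, h0⟩ :
            {c : Fin n → ZMod 4 // c ∈ (C' : Set (Fin n → ZMod 4)) ∧ c ≠ 0}) := by
          rw [← hc, Equiv.apply_symm_apply]
        rw [hr] at h1
        exact Sum.inl_injective h1
      have hx' : (r c).1 = x := congrArg Subtype.val hrc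
      show (fun j => δ j * x (σ j)) ∈ (C : Set (Fin n → ZMod 4))
      have : (fun j => δ j * x (σ j)) = c.1 := by
        funext j
        show δ j * x (σ j) = c.1 j
        have hσ : σ j = J j := rfl
        rw [hσ, ← hx', hcw c j, hδsq]
      rw [this]
      exact c.2.1

theorem stmt_18 (n : ℕ) (C C' : Submodule (ZMod 4) (Fin n → ZMod 4)) :
    Z4CodeEquiv n C C' ↔
      ∃ e : Z4Vert n (C : Set (Fin n → ZMod 4)) ≃ Z4Vert n (C' : Set (Fin n → ZMod 4)),
        ∀ u v, Z4Arc n (C : Set (Fin n → ZMod 4)) u v ↔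
          Z4Arc n (C' : Set (Fin n → ZMod 4)) (e u) (e v) :=
  ⟨fun h => fwd n C C' h, fun h => bwd n C C' h⟩
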